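/- Let m, n be positive integers with m ≥ n + 1, let A be a real m×n matrix, and let B be the real m×(n+2) matrix obtained by appending a column w₁ on the left of A and a column w₂ on the right of A, and assume rank(B) > rank(A). Let b be a random vector in ℝ^m whose m coordinates are independent and identically distributed, each with a probability density function with respect to Lebesgue measure. Then with probability one, the infimum over u ∈ ℝ^{n+2} of ‖Bu − b‖² is strictly smaller than the infimum over u ∈ ℝ^n of ‖Au − b‖²; equivalently, the set of b ∈ ℝ^m for which inf_u ‖Bu − b‖² ≥ inf_u ‖Au − b‖² has probability zero under the law of b. -/

import Mathlib

open MeasureTheory Finset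

/-- Appending the embedded coefficient vector (zero at the first and last
positions) to `B` reproduces `A.mulVec`. -/
lemma mulVec_emb {m n : ℕ} (A : Matrix (Fin m) (Fin n) ℝ)
    (B : Matrix (Fin m) (Fin (n + 2)) ℝ)
    (hBmid : ∀ i (j : Fin n), B i ⟨(j : ℕ) + 1, by omega⟩ = A i j)
    (u : Fin n → ℝ) :
    B.mulVec (Fin.cons 0 (Fin.snoc u 0)) = A.mulVec u := by
  funext i
  simp only [Matrix.mulVec, dotProduct]
  rw [Fin.sum_univ_succ]
  simp only [Fin.cons_zero, mul_zero, Fin.cons_succ, zero_add]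
  rw [Fin.sum_univ_castSucc]
  simp only [Fin.snoc_castSucc, Fin.snoc_last, mul_zero, add_zero]
  refine Finset.sum_congr rfl fun j _ => ?_
  have h : (j.castSucc.succ : Fin (n+2)) = ⟨(j : ℕ) + 1, by omega⟩ := rfl
  rw [h, hBmid]

/-- Since `rank B > rank A`, there is a nonzero vector in the column span of
`B` orthogonal to the column span of `A`. -/
lemma exists_perp_vec {m n : ℕ}
    (A : Matrix (Fin m) (Fin n) ℝ)
    (B : Matrix (Fin m) (Fin (n + 2)) ℝ)
    (hBmid : ∀ i (j : Fin n), B i ⟨(j : ℕ) + 1, by omega⟩ = A i j)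
    (hrank : A.rank < B.rank) :
    ∃ v : Fin m → ℝ, v ≠ 0 ∧ (∃ c, B.mulVec c = v) ∧
      ∀ u : Fin n → ℝ, ∑ i, A.mulVec u i * v i = 0 := by
  classical
  let e : (Fin m → ℝ) ≃ₗ[ℝ] EuclideanSpace ℝ (Fin m) :=
    (WithLp.linearEquiv 2 ℝ (Fin m → ℝ)).symm
  set V : Submodule ℝ (EuclideanSpace ℝ (Fin m)) :=
    (LinearMap.range A.mulVecLin).map (e : (Fin m → ℝ) →ₗ[ℝ] EuclideanSpace ℝ (Fin m)) with hV
  set W : Submodule ℝ (EuclideanSpace ℝ (Fin m)) :=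
    (LinearMap.range B.mulVecLin).map (e : (Fin m → ℝ) →ₗ[ℝ] EuclideanSpace ℝ (Fin m)) with hW
  have hVW : V ≤ W := by
    refine Submodule.map_mono ?_
    rintro x ⟨u, rfl⟩
    exact ⟨Fin.cons 0 (Fin.snoc u 0), by
      simp only [Matrix.mulVecLin_apply]; exact mulVec_emb A B hBmid u⟩
  have hfV : Module.finrank ℝ V = A.rank := by
    rw [Matrix.rank]; exact LinearEquiv.finrank_map_eq e _
  have hfW : Module.finrank ℝ W = B.rank := by
    rw [Matrix.rank]; exact LinearEquiv.finrank_map_eq e _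
  have hne : V ≠ W := fun h => by rw [h, hfW] at hfV; omega
  obtain ⟨w, hwW, hwV⟩ := SetLike.exists_of_lt (lt_of_le_of_ne hVW hne)
  set v : EuclideanSpace ℝ (Fin m) :=
    w - (V.orthogonalProjectionOnto w : EuclideanSpace ℝ (Fin m)) with hv
  have hv0 : v ≠ 0 := by
    rw [hv, sub_ne_zero]
    intro h
    exact hwV (h ▸ (V.orthogonalProjectionOnto w).2)
  have hvperp : v ∈ Vᗮ := Submodule.sub_starProjection_mem_orthogonal (K := V) w
  have hvW : v ∈ W := W.sub_mem hwW (hVW (V.orthogonalProjectionOnto w).2)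
  refine ⟨e.symm v, ?_, ?_, ?_⟩
  · simpa using fun h => hv0 (e.symm.injective (by simpa using h))
  · obtain ⟨x, ⟨c, rfl⟩, hx⟩ := hvW
    exact ⟨c, by rw [← hx]; simp [Matrix.mulVecLin_apply]⟩
  · intro u
    have hm : e (A.mulVec u) ∈ V := ⟨A.mulVec u, ⟨u, by simp [Matrix.mulVecLin_apply]⟩, rfl⟩
    have h0 : (inner ℝ (e (A.mulVec u)) v : ℝ) = 0 := hvperp (e (A.mulVec u)) hm
    rw [← h0, PiLp.inner_apply]
    refine Finset.sum_congr rfl fun i _ => ?_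
    simp [e, RCLike.inner_apply, mul_comm]

/-- If `b` is not orthogonal to the vector `v` of `exists_perp_vec`, then the
least-squares residual over `B` is strictly smaller than over `A`. -/
lemma inf_lt_inf {m n : ℕ} (A : Matrix (Fin m) (Fin n) ℝ)
    (B : Matrix (Fin m) (Fin (n + 2)) ℝ)
    (hBmid : ∀ i (j : Fin n), B i ⟨(j : ℕ) + 1, by omega⟩ = A i j)
    (v : Fin m → ℝ) (c : Fin (n + 2) → ℝ) (hc : B.mulVec c = v)
    (hvA : ∀ u : Fin n → ℝ, ∑ i, A.mulVec u i * v i = 0)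
    (hv0 : v ≠ 0) (b : Fin m → ℝ) (hs : ∑ i, v i * b i ≠ 0) :
    ¬ ((⨅ u : Fin n → ℝ, ∑ i, (A.mulVec u i - b i) ^ 2) ≤
        ⨅ u : Fin (n + 2) → ℝ, ∑ i, (B.mulVec u i - b i) ^ 2) := by
  intro hle
  have hnv : 0 < ∑ i, v i ^ 2 := by
    obtain ⟨i, hi⟩ := Function.ne_iff.1 hv0
    exact Finset.sum_pos' (fun j _ => sq_nonneg _)
      ⟨i, Finset.mem_univ i, sq_pos_of_ne_zero hi⟩
  have hnv' : (∑ i, v i ^ 2) ≠ 0 := ne_of_gt hnv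
  set s : ℝ := ∑ i, v i * b i with hsdef
  set nv : ℝ := ∑ i, v i ^ 2 with hnvdef
  have bddB : BddBelow (Set.range fun u : Fin (n+2) → ℝ => ∑ i, (B.mulVec u i - b i)^2) :=
    ⟨0, by rintro x ⟨u, rfl⟩; positivity⟩
  have key : ∀ u : Fin n → ℝ,
      (⨅ u' : Fin (n+2) → ℝ, ∑ i, (B.mulVec u' i - b i)^2) ≤
        (∑ i, (A.mulVec u i - b i)^2) - s^2/nv := by
    intro u
    have hpt : B.mulVec (Fin.cons 0 (Fin.snoc u 0) + (s/nv) • c) =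
        fun i => A.mulVec u i + (s/nv) * v i := by
      rw [Matrix.mulVec_add, Matrix.mulVec_smul, mulVec_emb A B hBmid u, hc]
      funext i; simp [smul_eq_mul]
    have hval : ∑ i, (B.mulVec (Fin.cons 0 (Fin.snoc u 0) + (s/nv) • c) i - b i)^2 =
        (∑ i, (A.mulVec u i - b i)^2) - s^2/nv := by
      have step1 : ∑ i, (B.mulVec (Fin.cons 0 (Fin.snoc u 0) + (s/nv) • c) i - b i)^2
          = ∑ i, ((A.mulVec u i - b i)^2 + 2*(s/nv)*(A.mulVec u i * v i)
              - 2*(s/nv)*(v i * b i) + (s/nv)^2 * v i^2) := by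
        refine Finset.sum_congr rfl fun i _ => ?_
        rw [hpt]; ring
      have step2 : ∑ i, ((A.mulVec u i - b i)^2 + 2*(s/nv)*(A.mulVec u i * v i)
              - 2*(s/nv)*(v i * b i) + (s/nv)^2 * v i^2)
          = (∑ i, (A.mulVec u i - b i)^2) + 2*(s/nv)*(∑ i, A.mulVec u i * v i)
              - 2*(s/nv)*s + (s/nv)^2 * nv := by
        rw [hsdef, hnvdef]
        simp [Finset.sum_add_distrib, Finset.sum_sub_distrib, Finset.mul_sum]
      rw [step1, step2, hvA u]
      field_simp
      ring
    exact le_trans (ciInf_le bddB _) (le_of_eq hval)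
  have h2 : (⨅ u : Fin n → ℝ, ∑ i, (A.mulVec u i - b i)^2) + s^2/nv ≤
      ⨅ u : Fin n → ℝ, ∑ i, (A.mulVec u i - b i)^2 := by
    refine le_ciInf fun u => ?_
    have := le_trans hle (key u)
    linarith
  have hpos : 0 < s^2/nv := div_pos (sq_pos_of_ne_zero hs) hnv
  linarith

/-- The hyperplane orthogonal to a nonzero vector is null for a product of
measures having densities with respect to Lebesgue measure. -/
lemma hyperplane_null (m : ℕ) (f : ℝ → ENNReal)
    [SigmaFinite (volume.withDensity f)] (v : Fin m → ℝ) (hv : v ≠ 0) :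
    (Measure.pi fun _ : Fin m => volume.withDensity f)
      {b : Fin m → ℝ | ∑ i, v i * b i = 0} = 0 := by
  obtain ⟨i₀, hi₀⟩ := Function.ne_iff.1 hv
  obtain ⟨m', rfl⟩ : ∃ m', m = m' + 1 := ⟨m - 1, by have := i₀.pos; omega⟩
  set T : Set (Fin (m' + 1) → ℝ) := {b | ∑ i, v i * b i = 0} with hT
  have hTm : MeasurableSet T := by
    have hmeas : Measurable fun b : Fin (m'+1) → ℝ => ∑ i, v i * b i :=
      Finset.measurable_sum _ (fun i _ => by fun_prop)
    exact hmeas (measurableSet_singleton 0)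
  set e₂ := MeasurableEquiv.piFinSuccAbove (fun _ : Fin (m'+1) => ℝ) i₀ with he₂
  have hmp := measurePreserving_piFinSuccAbove
    (fun _ : Fin (m'+1) => volume.withDensity f) i₀
  have hS₂ : MeasurableSet (e₂.symm ⁻¹' T) := e₂.symm.measurable hTm
  have key : (Measure.pi fun _ : Fin (m'+1) => volume.withDensity f) T =
      ((volume.withDensity f).prod
        (Measure.pi fun _ : Fin m' => volume.withDensity f)) (e₂.symm ⁻¹' T) :=
    ((MeasurePreserving.symm e₂ hmp).measure_preimage_equiv T).symm
  rw [key, ← Measure.prod_swap, Measure.map_apply measurable_swap hS₂,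
    Measure.prod_apply (measurable_swap hS₂)]
  have hzero : ∀ y : Fin m' → ℝ,
      (volume.withDensity f) (Prod.mk y ⁻¹' (Prod.swap ⁻¹' (e₂.symm ⁻¹' T))) = 0 := by
    intro y
    have hsub : (Prod.mk y ⁻¹' (Prod.swap ⁻¹' (e₂.symm ⁻¹' T))) ⊆
        {-(∑ j, v (i₀.succAbove j) * y j) / v i₀} := by
      intro x hx
      simp only [Set.mem_preimage, Prod.swap_prod_mk, hT, Set.mem_setOf_eq, he₂,
        MeasurableEquiv.piFinSuccAbove_symm_apply] at hx
      rw [Fin.sum_univ_succAbove _ i₀] at hx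
      simp only [Fin.insertNthEquiv, Equiv.coe_fn_mk, Fin.insertNth_apply_same,
        Fin.insertNth_apply_succAbove] at hx
      have hxv : v i₀ * x = -(∑ j, v (i₀.succAbove j) * y j) := by linarith
      simp only [Set.mem_singleton_iff]
      rw [eq_div_iff hi₀]
      linarith
    exact measure_mono_null hsub
      ((withDensity_absolutelyContinuous volume f) (measure_singleton _))
  rw [lintegral_congr hzero, lintegral_zero]

/-- Claim 1 (Inflating Effect): appending two columns to a tall matrix `A`,
strictly increasing its rank, strictly decreases the least-squares residual
for almost every right-hand side `b` whose coordinates are i.i.d. with a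
density with respect to Lebesgue measure. -/
theorem inflating_effect
    (m n : ℕ) (hmn : m ≥ n + 1)
    (A : Matrix (Fin m) (Fin n) ℝ)
    (w₁ w₂ : Fin m → ℝ)
    (B : Matrix (Fin m) (Fin (n + 2)) ℝ)
    (hB0 : ∀ i, B i 0 = w₁ i)
    (hBlast : ∀ i, B i (Fin.last (n + 1)) = w₂ i)
    (hBmid : ∀ i (j : Fin n), B i ⟨(j : ℕ) + 1, by omega⟩ = A i j)
    (hrank : A.rank < B.rank)
    (f : ℝ → ENNReal)
    (hprob : IsProbabilityMeasure (volume.withDensity f)) :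
    (Measure.pi fun _ : Fin m => volume.withDensity f)
      {b : Fin m → ℝ |
        (⨅ u : Fin n → ℝ, ∑ i, (A.mulVec u i - b i) ^ 2) ≤
          ⨅ u : Fin (n + 2) → ℝ, ∑ i, (B.mulVec u i - b i) ^ 2} = 0 := by
  haveI := hprob
  obtain ⟨v, hv0, ⟨c, hc⟩, hvA⟩ := exists_perp_vec A B hBmid hrank
  have hsub : {b : Fin m → ℝ |
      (⨅ u : Fin n → ℝ, ∑ i, (A.mulVec u i - b i) ^ 2) ≤
        ⨅ u : Fin (n + 2) → ℝ, ∑ i, (B.mulVec u i - b i) ^ 2} ⊆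
      {b : Fin m → ℝ | ∑ i, v i * b i = 0} := by
    intro b hb
    by_contra hs
    exact inf_lt_inf A B hBmid v c hc hvA hv0 b hs hb
  exact measure_mono_null hsub (hyperplane_null m f v hv0)
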